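/- For fixed integers k ≥ 3 and i ≥ 1, as n → ∞ the tail sum ∑_{j=k+n-i+1}^{k+n} Γ(j)Γ(2k-1)/(Γ(j+k)Γ(k-1)) divided by i/n tends to 0. -/

import Mathlib

open Real Filter Finset

lemma gamma_ratio_le (j m : ℕ) (hj : 1 ≤ j) :
    Real.Gamma (j : ℝ) / Real.Gamma ((j : ℝ) + m) ≤ 1 / (j : ℝ) ^ m := by
  obtain ⟨p, rfl⟩ : ∃ p, j = p + 1 := ⟨j - 1, (Nat.succ_pred_eq_of_pos hj).symm⟩
  have h1 : Real.Gamma ((p + 1 : ℕ) : ℝ) = (p.factorial : ℝ) := by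
    push_cast
    exact Real.Gamma_nat_eq_factorial p
  have h2 : Real.Gamma (((p + 1 : ℕ) : ℝ) + m) = ((p + m).factorial : ℝ) := by
    have : (((p + 1 : ℕ) : ℝ) + m) = ((p + m : ℕ) : ℝ) + 1 := by push_cast; ring
    rw [this, Real.Gamma_nat_eq_factorial]
  rw [h1, h2]
  rw [div_le_div_iff₀ (by positivity) (by positivity)]
  have := Nat.factorial_mul_pow_le_factorial (m := p) (n := m)
  calc (p.factorial : ℝ) * ((p + 1 : ℕ) : ℝ) ^ m
      = ((p.factorial * (p + 1) ^ m : ℕ) : ℝ) := by push_cast; ring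
    _ ≤ (((p + m).factorial : ℕ) : ℝ) := by exact_mod_cast this
    _ = 1 * ((p + m).factorial : ℝ) := by ring

theorem lorenz_tail_sum (k i : ℕ) (hk : 3 ≤ k) (hi : 1 ≤ i) :
    Tendsto (fun n : ℕ =>
      (∑ j ∈ Finset.Icc (k + n - i + 1) (k + n),
          Real.Gamma j * Real.Gamma (2 * k - 1) /
            (Real.Gamma ((j : ℝ) + k) * Real.Gamma ((k : ℝ) - 1))) /
        ((i : ℝ) / n)) atTop (nhds 0) := by
  have hk3 : (3 : ℝ) ≤ (k : ℝ) := by exact_mod_cast hk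
  have hC : 0 < Real.Gamma (2 * (k : ℝ) - 1) := Real.Gamma_pos_of_pos (by linarith)
  have hD : 0 < Real.Gamma ((k : ℝ) - 1) := Real.Gamma_pos_of_pos (by linarith)
  set C : ℝ := Real.Gamma (2 * (k : ℝ) - 1) / Real.Gamma ((k : ℝ) - 1) with hCdef
  have hCpos : 0 < C := div_pos hC hD
  apply squeeze_zero' (g := fun n : ℕ => 8 * C / n)
  · filter_upwards [eventually_ge_atTop 1] with n hn
    have hn0 : (0 : ℝ) < (n : ℝ) := by exact_mod_cast hn
    apply div_nonneg
    · apply Finset.sum_nonneg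
      intro j _
      have hjk : 0 < Real.Gamma ((j : ℝ) + k) :=
        Real.Gamma_pos_of_pos (by positivity)
      have hj0 : 0 ≤ Real.Gamma (j : ℝ) := Real.Gamma_nonneg_of_nonneg (by positivity)
      positivity
    · positivity
  · filter_upwards [eventually_ge_atTop (2 * i)] with n hn
    have hni : i ≤ n := le_trans (by omega) hn
    have hn1 : 1 ≤ n := le_trans hi hni
    have hn0 : (0 : ℝ) < (n : ℝ) := by exact_mod_cast hn1
    have hi0 : (0 : ℝ) < (i : ℝ) := by exact_mod_cast hi
    -- each term bound
    have hterm : ∀ j ∈ Finset.Icc (k + n - i + 1) (k + n),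
        Real.Gamma j * Real.Gamma (2 * (k : ℝ) - 1) /
            (Real.Gamma ((j : ℝ) + k) * Real.Gamma ((k : ℝ) - 1))
          ≤ 8 * C / (n : ℝ) ^ 3 := by
      intro j hj
      rw [Finset.mem_Icc] at hj
      have hj1 : 1 ≤ j := by omega
      have hjhalf : (n : ℝ) / 2 ≤ (j : ℝ) := by
        have : 2 * j ≥ n := by omega
        have h2 : (n : ℝ) ≤ 2 * (j : ℝ) := by exact_mod_cast this
        linarith
      have hj0 : (0 : ℝ) < (j : ℝ) := by exact_mod_cast hj1
      have hratio : Real.Gamma (j : ℝ) / Real.Gamma ((j : ℝ) + k) ≤ 1 / (j : ℝ) ^ k :=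
        gamma_ratio_le j k hj1
      have hpow : (j : ℝ) ^ 3 ≤ (j : ℝ) ^ k := by
        apply pow_le_pow_right₀ (by exact_mod_cast hj1) hk
      have hjcube : (n : ℝ) ^ 3 / 8 ≤ (j : ℝ) ^ k := by
        calc (n : ℝ) ^ 3 / 8 = ((n : ℝ) / 2) ^ 3 := by ring
          _ ≤ (j : ℝ) ^ 3 := by
              apply pow_le_pow_left₀ (by positivity) hjhalf
          _ ≤ (j : ℝ) ^ k := hpow
      have hGj : Real.Gamma (j : ℝ) / Real.Gamma ((j : ℝ) + k) ≤ 8 / (n : ℝ) ^ 3 := by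
        refine hratio.trans ?_
        rw [div_le_div_iff₀ (by positivity) (by positivity)]
        nlinarith
      calc Real.Gamma j * Real.Gamma (2 * (k : ℝ) - 1) /
            (Real.Gamma ((j : ℝ) + k) * Real.Gamma ((k : ℝ) - 1))
          = (Real.Gamma (j : ℝ) / Real.Gamma ((j : ℝ) + k)) * C := by
            rw [hCdef, mul_div_mul_comm]
        _ ≤ (8 / (n : ℝ) ^ 3) * C := by
            apply mul_le_mul_of_nonneg_right hGj hCpos.le
        _ = 8 * C / (n : ℝ) ^ 3 := by ring
    have hsum : (∑ j ∈ Finset.Icc (k + n - i + 1) (k + n),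
          Real.Gamma j * Real.Gamma (2 * (k : ℝ) - 1) /
            (Real.Gamma ((j : ℝ) + k) * Real.Gamma ((k : ℝ) - 1)))
        ≤ (i : ℝ) * (8 * C / (n : ℝ) ^ 3) := by
      have hcard : (Finset.Icc (k + n - i + 1) (k + n)).card = i := by
        rw [Nat.card_Icc]; omega
      calc _ ≤ (Finset.Icc (k + n - i + 1) (k + n)).card • (8 * C / (n : ℝ) ^ 3) :=
            Finset.sum_le_card_nsmul _ _ _ hterm
        _ = (i : ℝ) * (8 * C / (n : ℝ) ^ 3) := by rw [hcard, nsmul_eq_mul]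
    rw [div_le_iff₀ (by positivity)]
    refine hsum.trans ?_
    have h1 : (i : ℝ) * (8 * C / (n : ℝ) ^ 3) = 8 * C * (i : ℝ) / (n : ℝ) ^ 3 := by ring
    have h2 : 8 * C / (n : ℝ) * ((i : ℝ) / n) = 8 * C * (i : ℝ) / (n : ℝ) ^ 2 := by
      field_simp
    rw [h1, h2]
    have hnn : (1 : ℝ) ≤ (n : ℝ) := by exact_mod_cast hn1
    gcongr _ / ?_
    exact pow_le_pow_right₀ hnn (by norm_num)
  · exact tendsto_const_div_atTop_nhds_zero_nat (8 * C)
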